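/- Let σ be a solution of U = V and ab (a ≠ b) a factor of σ(U) such that every occurrence of ab in σ(U) and σ(V) is implicit (lies inside σ(X) for single occurrences of variables). Define σ'(X) to be σ(X) with every occurrence of ab deleted. Then σ' is a solution of U = V with |σ'(U)| < |σ(U)|. -/

import Mathlib

variable {Γ 𝒳 : Type*}

def subApp (σ : 𝒳 → List Γ) (w : List (Γ ⊕ 𝒳)) : List Γ :=
  w.flatMap (Sum.elim (fun a => [a]) σ)

def occursAt (s p : List Γ) (i : ℕ) : Prop :=
  i + p.length ≤ s.length ∧ (s.drop i).take p.length = p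

def implicitAt (σ : 𝒳 → List Γ) (U : List (Γ ⊕ 𝒳)) (i len : ℕ) : Prop :=
  ∃ (j : ℕ) (X : 𝒳), U[j]? = some (Sum.inr X) ∧
    (subApp σ (U.take j)).length ≤ i ∧ i + len ≤ (subApp σ (U.take (j + 1))).length

/-- Greedily (leftmost) replace all occurrences of the pattern `p` by `r`. -/
def replAllBy {α : Type*} [DecidableEq α] (p r : List α) : List α → List α
  | [] => []
  | x :: xs =>
    if h : p <+: (x :: xs) ∧ p ≠ [] then
      r ++ replAllBy p r ((x :: xs).drop p.length)
    else
      x :: replAllBy p r xs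
termination_by l => l.length
decreasing_by
  · have hp : 0 < p.length := List.length_pos_iff.mpr h.2
    simp only [List.length_drop, List.length_cons]
    omega
  · simp

section Aux

variable [DecidableEq Γ] {a b : Γ}

lemma getLast?_decomp : ∀ {l : List Γ} {c : Γ}, l.getLast? = some c → ∃ t, l = t ++ [c] := by
  intro l
  induction l with
  | nil => intro c h; simp at h
  | cons x l IH =>
    intro c h
    match l with
    | [] =>
      simp only [List.getLast?_singleton, Option.some.injEq] at h
      exact ⟨[], by simp [h]⟩
    | y :: l' =>
      rw [List.getLast?_cons_cons] at h
      obtain ⟨t, ht⟩ := IH h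
      exact ⟨x :: t, by rw [ht]; rfl⟩

lemma head?_decomp {l : List Γ} {c : Γ} (h : l.head? = some c) : ∃ t, l = c :: t := by
  match l with
  | [] => simp at h
  | x :: t =>
    simp only [List.head?_cons, Option.some.injEq] at h
    exact ⟨t, by rw [h]⟩

lemma repl_nil : replAllBy [a,b] [] ([] : List Γ) = [] := by rw [replAllBy]

lemma repl_cons_match (xs : List Γ) :
    replAllBy [a,b] [] (a :: b :: xs) = replAllBy [a,b] [] xs := by
  rw [replAllBy, dif_pos ⟨⟨xs, rfl⟩, by simp⟩]
  simp

lemma repl_cons_nomatch {x : Γ} {xs : List Γ} (h : ¬ [a,b] <+: (x :: xs)) :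
    replAllBy [a,b] [] (x :: xs) = x :: replAllBy [a,b] [] xs := by
  rw [replAllBy, dif_neg (by simp [h])]

lemma repl_singleton (c : Γ) : replAllBy [a,b] [] [c] = [c] := by
  rw [repl_cons_nomatch, repl_nil]
  intro h
  have := h.length_le
  simp at this

lemma repl_length_le : ∀ (n : ℕ) (w : List Γ), w.length ≤ n →
    (replAllBy [a,b] [] w).length ≤ w.length := by
  intro n
  induction n with
  | zero =>
    intro w hw
    rw [Nat.le_zero, List.length_eq_zero_iff] at hw
    subst hw
    rw [repl_nil]
  | succ n ih =>
    intro w hw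
    match w with
    | [] => rw [repl_nil]
    | x :: xs =>
      by_cases h : [a,b] <+: (x :: xs)
      · obtain ⟨t, ht⟩ := h
        simp only [List.cons_append, List.nil_append, List.cons.injEq] at ht
        obtain ⟨rfl, rfl, rfl⟩ := ht
        rw [repl_cons_match]
        have := ih t (by simp at hw ⊢; omega)
        simp at hw ⊢
        omega
      · rw [repl_cons_nomatch h]
        have := ih xs (by simp at hw; omega)
        simp
        omega

lemma repl_length_le' (w : List Γ) :
    (replAllBy [a,b] [] w).length ≤ w.length :=
  repl_length_le w.length w le_rfl

lemma occursAt_ab_iff (s : List Γ) (i : ℕ) :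
    occursAt s [a, b] i ↔ ∃ u v, s = u ++ a :: b :: v ∧ u.length = i := by
  constructor
  · rintro ⟨h1, h2⟩
    simp only [List.length_cons, List.length_nil] at h1
    refine ⟨s.take i, (s.drop i).drop 2, ?_, by simp; omega⟩
    conv_lhs => rw [← List.take_append_drop i s]
    congr 1
    conv_lhs => rw [← List.take_append_drop 2 (s.drop i)]
    rw [show (s.drop i).take ([a,b]).length = (s.drop i).take 2 from rfl] at h2
    rw [h2]
    rfl
  · rintro ⟨u, v, rfl, rfl⟩
    refine ⟨by simp, ?_⟩
    rw [List.drop_left]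
    rfl

lemma repl_length_lt (hab : a ≠ b) : ∀ (n : ℕ) (w : List Γ), w.length ≤ n →
    (∃ i, occursAt w [a,b] i) → (replAllBy [a,b] [] w).length < w.length := by
  intro n
  induction n with
  | zero =>
    rintro w hw ⟨i, hi, -⟩
    simp at hi
    omega
  | succ n ih =>
    rintro w hw ⟨i, hi⟩
    rw [occursAt_ab_iff] at hi
    obtain ⟨u, v, rfl, rfl⟩ := hi
    match u with
    | [] =>
      simp only [List.nil_append]
      rw [repl_cons_match]
      have := repl_length_le' (a := a) (b := b) v
      simp
      omega
    | x :: u' =>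
      by_cases h : [a,b] <+: (x :: (u' ++ a :: b :: v))
      · obtain ⟨t, ht⟩ := h
        simp only [List.cons_append, List.nil_append, List.cons.injEq] at ht
        obtain ⟨rfl, hbt⟩ := ht
        match u' with
        | [] =>
          simp only [List.nil_append, List.cons.injEq] at hbt
          exact absurd hbt.1.symm hab
        | y :: u'' =>
          simp only [List.cons_append, List.cons.injEq] at hbt
          obtain ⟨rfl, rfl⟩ := hbt
          simp only [List.cons_append]
          rw [repl_cons_match]
          have := ih (u'' ++ a :: b :: v) (by simp at hw ⊢; omega)
            ⟨u''.length, by rw [occursAt_ab_iff]; exact ⟨u'', v, rfl, rfl⟩⟩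
          simp at this ⊢
          omega
      · simp only [List.cons_append] at h ⊢
        rw [repl_cons_nomatch h]
        have := ih (u' ++ a :: b :: v) (by simp at hw ⊢; omega)
          ⟨u'.length, by rw [occursAt_ab_iff]; exact ⟨u', v, rfl, rfl⟩⟩
        simp at this ⊢
        omega

lemma repl_append (hab : a ≠ b) : ∀ (n : ℕ) (u v : List Γ), u.length ≤ n →
    ¬(u.getLast? = some a ∧ v.head? = some b) →
    replAllBy [a,b] [] (u ++ v) = replAllBy [a,b] [] u ++ replAllBy [a,b] [] v := by
  intro n
  induction n with
  | zero =>
    intro u v hu _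
    rw [Nat.le_zero, List.length_eq_zero_iff] at hu
    subst hu
    simp [repl_nil]
  | succ n ih =>
    intro u v hu hcross
    match u with
    | [] => simp [repl_nil]
    | x :: u' =>
      by_cases h : [a,b] <+: (x :: (u' ++ v))
      · obtain ⟨t, ht⟩ := h
        simp only [List.cons_append, List.nil_append, List.cons.injEq] at ht
        obtain ⟨rfl, hbt⟩ := ht
        match u' with
        | [] =>
          exfalso
          simp only [List.nil_append] at hbt
          exact hcross ⟨by simp, by rw [← hbt]; rfl⟩
        | y :: u'' =>
          simp only [List.cons_append, List.cons.injEq] at hbt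
          obtain ⟨rfl, rfl⟩ := hbt
          simp only [List.cons_append]
          rw [repl_cons_match, repl_cons_match]
          refine ih u'' v (by simp at hu; omega) ?_
          rintro ⟨h1, h2⟩
          refine hcross ⟨?_, h2⟩
          match u'' with
          | [] => simp at h1
          | z :: u''' =>
            rw [List.getLast?_cons_cons, List.getLast?_cons_cons]
            exact h1
      · have h' : ¬ [a,b] <+: (x :: u') := fun hp =>
          h (by simpa using hp.trans (List.prefix_append (x :: u') v))
        simp only [List.cons_append] at h ⊢
        rw [repl_cons_nomatch h, repl_cons_nomatch h', List.cons_append]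
        congr 1
        refine ih u' v (by simp at hu; omega) ?_
        rintro ⟨h1, h2⟩
        refine hcross ⟨?_, h2⟩
        match u' with
        | [] => simp at h1
        | z :: u'' => rw [List.getLast?_cons_cons]; exact h1

omit [DecidableEq Γ] in
lemma subApp_cons (σ : 𝒳 → List Γ) (x : Γ ⊕ 𝒳) (w : List (Γ ⊕ 𝒳)) :
    subApp σ (x :: w) = Sum.elim (fun a => [a]) σ x ++ subApp σ w := by
  simp [subApp]

omit [DecidableEq Γ] in
lemma subApp_prefix (σ : 𝒳 → List Γ) {u v : List (Γ ⊕ 𝒳)} (h : u <+: v) :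
    subApp σ u <+: subApp σ v := by
  obtain ⟨t, rfl⟩ := h
  exact ⟨subApp σ t, by simp [subApp]⟩

omit [DecidableEq Γ] in
lemma subApp_take_mono (σ : 𝒳 → List Γ) (w : List (Γ ⊕ 𝒳)) {j k : ℕ} (h : j ≤ k) :
    (subApp σ (w.take j)).length ≤ (subApp σ (w.take k)).length := by
  refine (subApp_prefix σ ?_).length_le
  rw [show w.take j = (w.take k).take j by rw [List.take_take, min_eq_left h]]
  exact List.take_prefix _ _

lemma subApp_repl (hab : a ≠ b) (σ : 𝒳 → List Γ) :
    ∀ w : List (Γ ⊕ 𝒳),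
      (∀ i, occursAt (subApp σ w) [a,b] i → implicitAt σ w i 2) →
      subApp (fun X => replAllBy [a,b] [] (σ X)) w = replAllBy [a,b] [] (subApp σ w) := by
  intro w
  induction w with
  | nil => intro _; simp [subApp, repl_nil]
  | cons x w' IH =>
    intro himp
    have key : subApp σ (x :: w')
        = Sum.elim (fun a => [a]) σ x ++ subApp σ w' := subApp_cons σ x w'
    have hL1 : subApp σ ((x :: w').take 1) = Sum.elim (fun a => [a]) σ x := by
      show subApp σ [x] = _
      simp [subApp]
    -- no crossing at boundary
    have hcross : ¬((Sum.elim (fun a => [a]) σ x).getLast? = some a ∧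
        (subApp σ w').head? = some b) := by
      rintro ⟨h1, h2⟩
      obtain ⟨B', hB'⟩ := getLast?_decomp h1
      obtain ⟨R', hR'⟩ := head?_decomp h2
      have hocc : occursAt (subApp σ (x :: w')) [a,b] B'.length :=
        (occursAt_ab_iff _ _).mpr ⟨B', R', by rw [key, hB', hR']; simp, rfl⟩
      obtain ⟨j, X, hj, hj1, hj2⟩ := himp _ hocc
      have hlen1 : (subApp σ ((x :: w').take 1)).length = B'.length + 1 := by
        rw [hL1, hB']; simp
      match j with
      | 0 =>
        have h0 : (subApp σ ((x :: w').take (0+1))).length = B'.length + 1 := hlen1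
        omega
      | j' + 1 =>
        have hmono := subApp_take_mono σ (x :: w')
          (show 1 ≤ j' + 1 from Nat.succ_le_succ (Nat.zero_le j'))
        rw [hlen1] at hmono
        omega
    have hP' : ∀ i, occursAt (subApp σ w') [a,b] i → implicitAt σ w' i 2 := by
      intro i hi
      have hocc : occursAt (subApp σ (x :: w')) [a,b]
          ((Sum.elim (fun a => [a]) σ x).length + i) := by
        rw [occursAt_ab_iff] at hi ⊢
        obtain ⟨u, v, hu, rfl⟩ := hi
        exact ⟨Sum.elim (fun a => [a]) σ x ++ u, v, by rw [key, hu]; simp, by simp⟩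
      obtain ⟨j, X, hj, hj1, hj2⟩ := himp _ hocc
      match j with
      | 0 =>
        exfalso
        have h0 : (subApp σ ((x :: w').take (0+1))).length
            = (Sum.elim (fun a => [a]) σ x).length := by rw [hL1]
        omega
      | j' + 1 =>
        refine ⟨j', X, by simpa using hj, ?_, ?_⟩
        · have he : (subApp σ ((x :: w').take (j' + 1))).length
              = (Sum.elim (fun a => [a]) σ x).length + (subApp σ (w'.take j')).length := by
            simp only [List.take_succ_cons, subApp_cons, List.length_append]
          omega
        · have he : (subApp σ ((x :: w').take (j' + 1 + 1))).length
              = (Sum.elim (fun a => [a]) σ x).length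
                  + (subApp σ (w'.take (j' + 1))).length := by
            simp only [List.take_succ_cons, subApp_cons, List.length_append]
          omega
    have hBrepl : Sum.elim (fun a => [a]) (fun X => replAllBy [a,b] [] (σ X)) x
        = replAllBy [a,b] [] (Sum.elim (fun a => [a]) σ x) := by
      match x with
      | Sum.inl c => simp [repl_singleton]
      | Sum.inr X => simp
    rw [subApp_cons, key,
      repl_append hab (Sum.elim (fun a => [a]) σ x).length _ (subApp σ w') le_rfl hcross,
      hBrepl, IH hP']

end Aux

/-- If every occurrence of ab (a ≠ b) in σ(U) and σ(V) is implicit, then deleting every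
occurrence of ab inside each σ(X) yields a strictly shorter solution of U = V. -/
theorem stmt3 [DecidableEq Γ] (U V : List (Γ ⊕ 𝒳)) (σ : 𝒳 → List Γ)
    (a b : Γ) (hab : a ≠ b)
    (hsol : subApp σ U = subApp σ V)
    (hoccur : ∃ i, occursAt (subApp σ U) [a, b] i)
    (hU : ∀ i, occursAt (subApp σ U) [a, b] i → implicitAt σ U i 2)
    (hV : ∀ i, occursAt (subApp σ V) [a, b] i → implicitAt σ V i 2) :
    subApp (fun X => replAllBy [a, b] [] (σ X)) U =
      subApp (fun X => replAllBy [a, b] [] (σ X)) V ∧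
    (subApp (fun X => replAllBy [a, b] [] (σ X)) U).length < (subApp σ U).length := by
  have hUeq := subApp_repl hab σ U hU
  have hVeq := subApp_repl hab σ V hV
  constructor
  · rw [hUeq, hVeq, hsol]
  · rw [hUeq]
    exact repl_length_lt hab (subApp σ U).length _ le_rfl hoccur
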